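/- Let c ∈ ℝ, let I ⊆ ℝ be an open interval, and let Λ : I → (0, π/2) be differentiable with √3 e^c − 2 cos t sin t tan Λ(t) ≠ 0 for all t ∈ I and Λ′(t) = −(2 cos(2t) sin²Λ(t)) / (√3 e^c − 2 cos t sin t tan Λ(t)). Then (d/dt) [ (√3 e^c cot Λ(t) − sin 2t)² ] = 2 sin 4t; equivalently, the function t ↦ (√3 e^c cot Λ(t) − sin 2t)² + ½ cos 4t is constant on I. -/

import Mathlib

noncomputable section

open Real

/-- along a solution `Λ` of the ODE
`Λ′(t) = −2cos(2t)sin²Λ / (√3 e^c − 2 cos t sin t tan Λ)`, the expression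
`(√3 e^c cot Λ − sin 2t)²` has derivative `2 sin 4t`; equivalently
`t ↦ (√3 e^c cot Λ(t) − sin 2t)² + ½ cos 4t` is constant on the interval. -/
theorem stmt13 (c a b : ℝ) (I : Set ℝ) (hI : I = Set.Ioo a b)
    (Λ : ℝ → ℝ) (hrange : ∀ t ∈ I, Λ t ∈ Set.Ioo 0 (π / 2))
    (hden : ∀ t ∈ I,
      Real.sqrt 3 * Real.exp c - 2 * Real.cos t * Real.sin t * Real.tan (Λ t) ≠ 0)
    (hΛ : ∀ t ∈ I, HasDerivAt Λ
      (-(2 * Real.cos (2 * t) * Real.sin (Λ t) ^ 2) /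
        (Real.sqrt 3 * Real.exp c - 2 * Real.cos t * Real.sin t * Real.tan (Λ t))) t) :
    (∀ t ∈ I, HasDerivAt
        (fun s => (Real.sqrt 3 * Real.exp c * (Real.cos (Λ s) / Real.sin (Λ s))
          - Real.sin (2 * s)) ^ 2)
        (2 * Real.sin (4 * t)) t) ∧
    (∀ s ∈ I, ∀ t ∈ I,
      (Real.sqrt 3 * Real.exp c * (Real.cos (Λ s) / Real.sin (Λ s))
          - Real.sin (2 * s)) ^ 2 + (1 / 2) * Real.cos (4 * s)
        = (Real.sqrt 3 * Real.exp c * (Real.cos (Λ t) / Real.sin (Λ t))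
          - Real.sin (2 * t)) ^ 2 + (1 / 2) * Real.cos (4 * t)) := by
  have key : ∀ t ∈ I, HasDerivAt
        (fun s => (Real.sqrt 3 * Real.exp c * (Real.cos (Λ s) / Real.sin (Λ s))
          - Real.sin (2 * s)) ^ 2)
        (2 * Real.sin (4 * t)) t := by
    intro t ht
    have hr := hrange t ht
    have hsΛ : Real.sin (Λ t) ≠ 0 :=
      ne_of_gt (Real.sin_pos_of_pos_of_lt_pi hr.1 (lt_trans hr.2 (by linarith [pi_pos])))
    have hcΛ : Real.cos (Λ t) ≠ 0 :=
      ne_of_gt (Real.cos_pos_of_mem_Ioo ⟨by linarith [hr.1, pi_pos], hr.2⟩)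
    have hD := hden t ht
    rw [Real.tan_eq_sin_div_cos] at hD
    have hΛ' := hΛ t ht
    rw [Real.tan_eq_sin_div_cos] at hΛ'
    set Λ' := -(2 * Real.cos (2 * t) * Real.sin (Λ t) ^ 2) /
        (Real.sqrt 3 * Real.exp c - 2 * Real.cos t * Real.sin t * (Real.sin (Λ t) / Real.cos (Λ t)))
      with hΛ'def
    have hcos : HasDerivAt (fun s => Real.cos (Λ s)) (-Real.sin (Λ t) * Λ') t :=
      (Real.hasDerivAt_cos (Λ t)).comp t hΛ'
    have hsin : HasDerivAt (fun s => Real.sin (Λ s)) (Real.cos (Λ t) * Λ') t :=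
      (Real.hasDerivAt_sin (Λ t)).comp t hΛ'
    have hquot : HasDerivAt (fun s => Real.cos (Λ s) / Real.sin (Λ s))
        ((-Real.sin (Λ t) * Λ' * Real.sin (Λ t) - Real.cos (Λ t) * (Real.cos (Λ t) * Λ'))
          / Real.sin (Λ t) ^ 2) t := hcos.div hsin hsΛ
    have hsin2 : HasDerivAt (fun s => Real.sin (2 * s)) (Real.cos (2 * t) * 2) t := by
      have := (Real.hasDerivAt_sin (2 * t)).comp t ((hasDerivAt_id t).const_mul 2)
      exact this.congr_deriv (by ring)
    have hu : HasDerivAt (fun s => Real.sqrt 3 * Real.exp c * (Real.cos (Λ s) / Real.sin (Λ s))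
          - Real.sin (2 * s))
        (Real.sqrt 3 * Real.exp c * ((-Real.sin (Λ t) * Λ' * Real.sin (Λ t) - Real.cos (Λ t) * (Real.cos (Λ t) * Λ'))
          / Real.sin (Λ t) ^ 2) - Real.cos (2 * t) * 2) t :=
      (hquot.const_mul _).sub hsin2
    have := hu.pow 2
    convert this using 1
    case e'_4 => rfl
    case e'_5 => rfl
    case e'_8 => rfl
    have hE : Real.sqrt 3 * Real.exp c * Real.cos (Λ t)
        - 2 * Real.cos t * Real.sin t * Real.sin (Λ t) ≠ 0 := by
      have heq : (Real.sqrt 3 * Real.exp c - 2 * Real.cos t * Real.sin t *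
          (Real.sin (Λ t) / Real.cos (Λ t))) * Real.cos (Λ t)
          = Real.sqrt 3 * Real.exp c * Real.cos (Λ t)
            - 2 * Real.cos t * Real.sin t * Real.sin (Λ t) := by
        field_simp
      intro h
      rw [← heq] at h
      exact hD ((mul_eq_zero.mp h).resolve_right hcΛ)
    have hΛ'eq : Λ' = -(2 * Real.cos (2 * t) * Real.sin (Λ t) ^ 2 * Real.cos (Λ t)) /
        (Real.sqrt 3 * Real.exp c * Real.cos (Λ t)
          - 2 * Real.cos t * Real.sin t * Real.sin (Λ t)) := by
      rw [hΛ'def]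
      rw [div_eq_div_iff hD hE]
      field_simp
    have h4 : Real.sin (4 * t) = 2 * Real.sin (2 * t) * Real.cos (2 * t) := by
      have : (4 : ℝ) * t = 2 * (2 * t) := by ring
      rw [this, Real.sin_two_mul]
    have h2 : Real.sin (2 * t) = 2 * Real.sin t * Real.cos t := Real.sin_two_mul t
    have hsq : Real.sin (Λ t) ^ 2 + Real.cos (Λ t) ^ 2 = 1 := Real.sin_sq_add_cos_sq _
    rw [hΛ'eq, h4, h2]
    norm_num
    have hE' : Real.sqrt 3 * Real.exp c * Real.cos (Λ t) - 2 * Real.sin t * Real.cos t * Real.sin (Λ t) ≠ 0 := by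
      rw [mul_assoc 2 (Real.sin t), mul_comm (Real.sin t)]; rw [← mul_assoc]; exact hE
    field_simp
    linear_combination (-(Real.cos (2 * t) * Real.sqrt 3 * Real.exp c * Real.cos (Λ t))) * hsq
  refine ⟨key, ?_⟩
  have hG : ∀ t ∈ I, HasDerivAt
      (fun s => (Real.sqrt 3 * Real.exp c * (Real.cos (Λ s) / Real.sin (Λ s))
          - Real.sin (2 * s)) ^ 2 + (1 / 2) * Real.cos (4 * s)) 0 t := by
    intro t ht
    have hc4 : HasDerivAt (fun s => (1 / 2 : ℝ) * Real.cos (4 * s))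
        ((1 / 2) * (-Real.sin (4 * t) * 4)) t := by
      exact (((Real.hasDerivAt_cos (4 * t)).comp t ((hasDerivAt_id t).const_mul 4)).const_mul _).congr_deriv (by ring)
    have := (key t ht).add hc4
    convert this using 1
    case e'_4 => rfl
    case e'_5 => rfl
    case e'_8 => rfl
    ring
  -- constancy
  intro s hs t ht
  have main : ∀ x ∈ I, ∀ y ∈ I, x ≤ y →
      (fun s => (Real.sqrt 3 * Real.exp c * (Real.cos (Λ s) / Real.sin (Λ s))
          - Real.sin (2 * s)) ^ 2 + (1 / 2) * Real.cos (4 * s)) y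
      = (fun s => (Real.sqrt 3 * Real.exp c * (Real.cos (Λ s) / Real.sin (Λ s))
          - Real.sin (2 * s)) ^ 2 + (1 / 2) * Real.cos (4 * s)) x := by
    intro x hx y hy hxy
    have hsub : Set.Icc x y ⊆ I := by
      rw [hI] at hx hy ⊢
      exact fun z hz => ⟨lt_of_lt_of_le hx.1 hz.1, lt_of_le_of_lt hz.2 hy.2⟩
    exact constant_of_has_deriv_right_zero
      (fun z hz => (hG z (hsub hz)).continuousAt.continuousWithinAt)
      (fun z hz => ((hG z (hsub ⟨hz.1, le_of_lt hz.2⟩)).hasDerivWithinAt)) y ⟨hxy, le_rfl⟩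
  rcases le_total s t with h | h
  · exact (main s hs t ht h).symm
  · exact main t ht s hs h
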